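/- (Benign extra neighbours.) Let G be a simple graph, θ ∈ ℝ^n a state, and let A, B be adjacent vertices such that N(A) \ {B} = S ⊎ T and N(B) \ {A} = S for disjoint vertex sets S and T not containing A or B. Suppose both A and B attain stable equilibrium at θ: there exist μ_A ≥ 0 and μ_B ≥ 0 with Σ_{j ∈ N(A)} v_j = μ_A v_A and Σ_{j ∈ N(B)} v_j = μ_B v_B, where v_k = (cos θ_k, sin θ_k). If v_i = v_B for every i ∈ T, then A and B synchronize: v_A = v_B. -/

import Mathlib

open Finset

/-- The phasor of vertex `i` at state `θ`: the unit vector `(cos θᵢ, sin θᵢ) ∈ ℝ²`. -/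
noncomputable def phasor {V : Type*} (θ : V → ℝ) (i : V) : ℝ × ℝ :=
  (Real.cos (θ i), Real.sin (θ i))

/-- **Benign extra neighbours.** Let `A, B` be adjacent vertices with
`N(A) \ {B} = S ⊎ T` and `N(B) \ {A} = S` for disjoint sets `S, T` avoiding `A, B`.
If both `A` and `B` attain stable equilibrium at `θ` and `v_i = v_B` for every `i ∈ T`,
then `A` and `B` synchronize: `v_A = v_B`. -/
theorem stmt_9 {n : ℕ} (G : SimpleGraph (Fin n)) [DecidableRel G.Adj] (θ : Fin n → ℝ)
    (A B : Fin n) (hAB : G.Adj A B)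
    (S T : Finset (Fin n)) (hST : Disjoint S T)
    (hA_mem : A ∉ S ∪ T) (hB_mem : B ∉ S ∪ T)
    (hNA : G.neighborFinset A \ {B} = S ∪ T)
    (hNB : G.neighborFinset B \ {A} = S)
    (μA μB : ℝ) (hμA : 0 ≤ μA) (hμB : 0 ≤ μB)
    (heqA : ∑ j ∈ G.neighborFinset A, phasor θ j = μA • phasor θ A)
    (heqB : ∑ j ∈ G.neighborFinset B, phasor θ j = μB • phasor θ B)
    (hT : ∀ i ∈ T, phasor θ i = phasor θ B) :
    phasor θ A = phasor θ B := by
  have hBA : B ∈ G.neighborFinset A := by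
    simp [SimpleGraph.mem_neighborFinset, hAB]
  have hAB' : A ∈ G.neighborFinset B := by
    simp [SimpleGraph.mem_neighborFinset, hAB.symm]
  have hNAeq : G.neighborFinset A = insert B (S ∪ T) := by
    rw [← hNA]
    ext x
    simp only [Finset.mem_insert, Finset.mem_sdiff, Finset.mem_singleton]
    constructor
    · intro hx
      by_cases h : x = B
      · exact Or.inl h
      · exact Or.inr ⟨hx, h⟩
    · rintro (rfl | ⟨hx, _⟩)
      · exact hBA
      · exact hx
  have hNBeq : G.neighborFinset B = insert A S := by
    rw [← hNB]
    ext x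
    simp only [Finset.mem_insert, Finset.mem_sdiff, Finset.mem_singleton]
    constructor
    · intro hx
      by_cases h : x = A
      · exact Or.inl h
      · exact Or.inr ⟨hx, h⟩
    · rintro (rfl | ⟨hx, _⟩)
      · exact hAB'
      · exact hx
  have hAS : A ∉ S := fun h => hA_mem (Finset.mem_union_left _ h)
  rw [hNAeq, Finset.sum_insert hB_mem, Finset.sum_union hST] at heqA
  rw [hNBeq, Finset.sum_insert hAS] at heqB
  have hTsum : ∑ j ∈ T, phasor θ j = (T.card : ℝ) • phasor θ B := by
    rw [Finset.sum_congr rfl hT, Finset.sum_const]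
    exact (Nat.cast_smul_eq_nsmul ℝ _ _).symm
  rw [hTsum] at heqA
  -- combine
  have key : (μA + 1) • phasor θ A = (μB + (T.card : ℝ) + 1) • phasor θ B := by
    have h1 : ∑ j ∈ S, phasor θ j = μA • phasor θ A - phasor θ B
        - (T.card : ℝ) • phasor θ B := by
      rw [← heqA]; abel
    have h2 : ∑ j ∈ S, phasor θ j = μB • phasor θ B - phasor θ A := by
      rw [← heqB]; abel
    rw [h1] at h2
    have := sub_eq_zero.mpr h2
    rw [show (μA + 1) • phasor θ A = μA • phasor θ A + phasor θ A by
      rw [add_smul, one_smul],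
      show (μB + (T.card : ℝ) + 1) • phasor θ B
        = μB • phasor θ B + (T.card : ℝ) • phasor θ B + phasor θ B by
      rw [add_smul, add_smul, one_smul]]
    have : μA • phasor θ A - phasor θ B - (T.card : ℝ) • phasor θ B
        - (μB • phasor θ B - phasor θ A) = 0 := this
    linear_combination (norm := module) this
  have hc : (0:ℝ) < μA + 1 := by linarith
  have hd : (0:ℝ) < μB + (T.card : ℝ) + 1 := by
    have h0 : (0:ℝ) ≤ (T.card : ℝ) := Nat.cast_nonneg _
    linarith
  have hA1 : Real.cos (θ A) ^ 2 + Real.sin (θ A) ^ 2 = 1 := by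
    rw [add_comm]; exact Real.sin_sq_add_cos_sq _
  have hB1 : Real.cos (θ B) ^ 2 + Real.sin (θ B) ^ 2 = 1 := by
    rw [add_comm]; exact Real.sin_sq_add_cos_sq _
  have k1 : (μA + 1) * Real.cos (θ A) = (μB + (T.card : ℝ) + 1) * Real.cos (θ B) :=
    congrArg Prod.fst key
  have k2 : (μA + 1) * Real.sin (θ A) = (μB + (T.card : ℝ) + 1) * Real.sin (θ B) :=
    congrArg Prod.snd key
  have hcd : μA + 1 = μB + (T.card : ℝ) + 1 := by
    have e1 : ((μA + 1) * Real.cos (θ A)) ^ 2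
        = ((μB + (T.card : ℝ) + 1) * Real.cos (θ B)) ^ 2 := by rw [k1]
    have e2 : ((μA + 1) * Real.sin (θ A)) ^ 2
        = ((μB + (T.card : ℝ) + 1) * Real.sin (θ B)) ^ 2 := by rw [k2]
    have hsq : (μA + 1) ^ 2 = (μB + (T.card : ℝ) + 1) ^ 2 := by
      linear_combination e1 + e2 - (μA + 1) ^ 2 * hA1 + (μB + (T.card : ℝ) + 1) ^ 2 * hB1
    nlinarith [hc, hd, sq_nonneg (μA + 1 - (μB + (T.card : ℝ) + 1))]
  rw [hcd] at key
  exact smul_right_injective (ℝ × ℝ) (ne_of_gt hd) key
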